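/- Let u(x) = (1/144)(2/81 - x⁴) for 0 ≤ x ≤ 1/3, u(x) = (1/144)(x - 2/3)⁴ for 1/3 < x ≤ 2/3, and u(x) = 0 for 2/3 < x ≤ 1. Then u ∈ W^{2,∞}(0,1), u ≥ 0, u'(0) = u'(1) = 0, and u satisfies -(u'/√(1+(u')²))' = -a(x)√(u(x)) a.e. on (0,1), where a(x) = (u'/√(1+(u')²))' / √(u(x)) for x ∈ [0, 2/3)\{1/3} and a(x) = A on [2/3, 1] for any constant A ∈ ℝ; moreover a ∈ L^∞(0,1). -/

import Mathlib

open Filter Set MeasureTheory Topology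

private lemma phi_hasDerivAt (t : ℝ) :
    HasDerivAt (fun s : ℝ => s / Real.sqrt (1 + s ^ 2))
      (1 / ((1 + t ^ 2) * Real.sqrt (1 + t ^ 2))) t := by
  have h1 : (0:ℝ) < 1 + t ^ 2 := by positivity
  have hs : Real.sqrt (1 + t ^ 2) ≠ 0 := by positivity
  have h2 : HasDerivAt (fun s : ℝ => 1 + s ^ 2) (2 * t) t := by
    simpa using (hasDerivAt_pow 2 t).const_add 1
  have hsq : HasDerivAt (fun s : ℝ => Real.sqrt (1 + s ^ 2))
      (t / Real.sqrt (1 + t ^ 2)) t := by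
    have := (Real.hasDerivAt_sqrt h1.ne').comp t h2
    refine this.congr_deriv ?_
    field_simp
  have := (hasDerivAt_id t).div hsq hs
  refine this.congr_deriv ?_
  have hss : Real.sqrt (1 + t ^ 2) ^ 2 = 1 + t ^ 2 := Real.sq_sqrt h1.le
  field_simp
  simp only [id]
  nlinarith [hss, Real.sqrt_nonneg (1 + t ^ 2)]

private lemma sqrt_one_le (t : ℝ) : 1 ≤ Real.sqrt (1 + t ^ 2) := by
  have hsq := Real.sq_sqrt (show (0:ℝ) ≤ 1 + t ^ 2 by positivity)
  have hnn := Real.sqrt_nonneg (1 + t ^ 2)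
  nlinarith [sq_nonneg t]

private lemma phi_deriv_pos (t : ℝ) :
    0 < 1 / ((1 + t ^ 2) * Real.sqrt (1 + t ^ 2)) := by
  have h1 : (0:ℝ) < 1 + t ^ 2 := by positivity
  positivity

private lemma phi_deriv_le_one (t : ℝ) :
    1 / ((1 + t ^ 2) * Real.sqrt (1 + t ^ 2)) ≤ 1 := by
  have h1 : (1:ℝ) ≤ 1 + t ^ 2 := by nlinarith [sq_nonneg t]
  have h2 : (1:ℝ) ≤ Real.sqrt (1 + t ^ 2) := sqrt_one_le t
  have h3 : (1:ℝ) ≤ (1 + t ^ 2) * Real.sqrt (1 + t ^ 2) := by nlinarith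
  rw [div_le_one (by linarith)]
  exact h3

private lemma cube_bound (a b : ℝ) (ha : |a| ≤ 1/3) (hb : |b| ≤ 1/3) :
    |a ^ 3 - b ^ 3| ≤ |a - b| := by
  have e : a ^ 3 - b ^ 3 = (a - b) * (a ^ 2 + a * b + b ^ 2) := by ring
  rw [e, abs_mul]
  have h2 : |a ^ 2 + a * b + b ^ 2| ≤ 1 := by
    rw [abs_le] at *
    constructor <;> nlinarith [sq_nonneg (a + b), sq_nonneg (a - b)]
  calc |a - b| * |a ^ 2 + a * b + b ^ 2| ≤ |a - b| * 1 :=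
        mul_le_mul_of_nonneg_left h2 (abs_nonneg _)
    _ = |a - b| := mul_one _

theorem stmt19 (A : ℝ) :
    let u : ℝ → ℝ := fun x =>
      if x ≤ 1/3 then (1/144) * (2/81 - x ^ 4)
      else if x ≤ 2/3 then (1/144) * (x - 2/3) ^ 4
      else 0
    let u' : ℝ → ℝ := fun x =>
      if x ≤ 1/3 then -(x ^ 3) / 36
      else if x ≤ 2/3 then (x - 2/3) ^ 3 / 36
      else 0
    let g : ℝ → ℝ := fun x => u' x / Real.sqrt (1 + (u' x) ^ 2)
    let a : ℝ → ℝ := fun x => if x < 2/3 then deriv g x / Real.sqrt (u x) else A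
    (∀ x ∈ Icc (0:ℝ) 1, 0 ≤ u x) ∧
    u' 0 = 0 ∧ u' 1 = 0 ∧
    (∀ x ∈ Icc (0:ℝ) 1, HasDerivAt u (u' x) x) ∧
    (∃ C : NNReal, LipschitzOnWith C u' (Icc 0 1)) ∧
    (∀ᵐ x ∂(volume.restrict (Ioo (0:ℝ) 1)),
      -(deriv g x) = -(a x * Real.sqrt (u x))) ∧
    (∃ C, ∀ x ∈ Icc (0:ℝ) 1, |a x| ≤ C) := by
  intro u u' g a
  -- basic unfolding equations
  have hu1 : ∀ y : ℝ, y ≤ 1/3 → u y = (1/144) * (2/81 - y ^ 4) :=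
    fun y hy => if_pos hy
  have hu2 : ∀ y : ℝ, ¬(y ≤ 1/3) → y ≤ 2/3 → u y = (1/144) * (y - 2/3) ^ 4 :=
    fun y hy hy2 => (if_neg hy).trans (if_pos hy2)
  have hu3 : ∀ y : ℝ, ¬(y ≤ 2/3) → u y = 0 :=
    fun y hy => (if_neg (fun h : y ≤ 1/3 => hy (h.trans (by norm_num)))).trans (if_neg hy)
  have hv1 : ∀ y : ℝ, y ≤ 1/3 → u' y = -(y ^ 3) / 36 := fun y hy => if_pos hy
  have hv2 : ∀ y : ℝ, ¬(y ≤ 1/3) → y ≤ 2/3 → u' y = (y - 2/3) ^ 3 / 36 :=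
    fun y hy hy2 => (if_neg hy).trans (if_pos hy2)
  have hv3 : ∀ y : ℝ, ¬(y ≤ 2/3) → u' y = 0 :=
    fun y hy => (if_neg (fun h : y ≤ 1/3 => hy (h.trans (by norm_num)))).trans (if_neg hy)
  -- u agrees with the quartic Q on Icc (1/3) (2/3)
  have huQ : ∀ y ∈ Icc (1/3:ℝ) (2/3), u y = (1/144) * (y - 2/3) ^ 4 := by
    intro y hy
    by_cases h : y ≤ 1/3
    · have hy13 : y = 1/3 := le_antisymm h hy.1
      rw [hu1 y h, hy13]; norm_num
    · exact hu2 y h hy.2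
  -- derivatives of the polynomial pieces
  have hL : ∀ x : ℝ, HasDerivAt (fun y : ℝ => (1/144) * (2/81 - y ^ 4)) (-(x ^ 3) / 36) x := by
    intro x
    have := ((hasDerivAt_pow 4 x).const_sub (2/81)).const_mul (1/144 : ℝ)
    refine this.congr_deriv ?_
    norm_num; ring
  have hQ : ∀ x : ℝ, HasDerivAt (fun y : ℝ => (1/144) * (y - 2/3) ^ 4) ((x - 2/3) ^ 3 / 36) x := by
    intro x
    have := (((hasDerivAt_id x).sub_const (2/3)).pow 4).const_mul (1/144 : ℝ)
    refine this.congr_deriv ?_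
    norm_num; ring
  refine ⟨?_, ?_, ?_, ?_, ?_, ?_, ?_⟩
  · -- nonnegativity
    intro x hx
    by_cases h : x ≤ 1/3
    · rw [hu1 x h]
      nlinarith [pow_le_pow_left₀ hx.1 h 4]
    · by_cases h2 : x ≤ 2/3
      · rw [hu2 x h h2]; positivity
      · rw [hu3 x h2]
  · rw [hv1 0 (by norm_num)]; norm_num
  · rw [hv3 1 (by norm_num)]
  · -- HasDerivAt u (u' x) x
    intro x _
    rcases lt_trichotomy x (1/3) with h1 | h1 | h1
    · rw [hv1 x h1.le]
      exact (hL x).congr_of_eventuallyEq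
        (eventuallyEq_of_mem (Iio_mem_nhds h1) (fun y hy => hu1 y (le_of_lt hy)))
    · subst h1
      rw [hv1 (1/3) le_rfl]
      have hleft : HasDerivWithinAt u (-((1/3:ℝ) ^ 3) / 36) (Iic (1/3)) (1/3) :=
        ((hL (1/3)).hasDerivWithinAt).congr (fun y hy => hu1 y hy) (hu1 _ le_rfl)
      have hright : HasDerivWithinAt u (-((1/3:ℝ) ^ 3) / 36) (Icc (1/3) (2/3)) (1/3) := by
        have h := (hQ (1/3)).hasDerivWithinAt (s := Icc (1/3) (2/3))
        have he : ((1/3:ℝ) - 2/3) ^ 3 / 36 = -((1/3:ℝ) ^ 3) / 36 := by norm_num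
        rw [he] at h
        exact h.congr (fun y hy => huQ y hy) (huQ _ ⟨le_rfl, by norm_num⟩)
      refine (hleft.union hright).hasDerivAt ?_
      refine mem_of_superset (Iio_mem_nhds (show (1/3:ℝ) < 2/3 by norm_num)) (fun y hy => ?_)
      by_cases h : y ≤ 1/3
      · exact Or.inl h
      · exact Or.inr ⟨le_of_not_ge h, le_of_lt hy⟩
    · rcases lt_trichotomy x (2/3) with h2 | h2 | h2
      · rw [hv2 x (not_le.2 h1) h2.le]
        exact (hQ x).congr_of_eventuallyEq
          (eventuallyEq_of_mem (Ioo_mem_nhds h1 h2)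
            (fun y hy => hu2 y (not_le.2 hy.1) (le_of_lt hy.2)))
      · subst h2
        rw [hv2 (2/3) (by norm_num) le_rfl]
        have hleft : HasDerivWithinAt u (((2/3:ℝ) - 2/3) ^ 3 / 36) (Icc (1/3) (2/3)) (2/3) :=
          ((hQ (2/3)).hasDerivWithinAt).congr (fun y hy => huQ y hy)
            (huQ _ ⟨by norm_num, le_rfl⟩)
        have hright : HasDerivWithinAt u (((2/3:ℝ) - 2/3) ^ 3 / 36) (Ici (2/3)) (2/3) := by
          have h := (hasDerivAt_const (2/3:ℝ) (0:ℝ)).hasDerivWithinAt (s := Ici (2/3))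
          have he : ((2/3:ℝ) - 2/3) ^ 3 / 36 = 0 := by norm_num
          rw [he]
          refine h.congr (fun y hy => ?_) ?_
          · rcases eq_or_lt_of_le (mem_Ici.1 hy) with h' | h'
            · rw [← h', hu2 (2/3) (by norm_num) le_rfl]; norm_num
            · rw [hu3 y (not_le.2 h')]
          · rw [hu2 (2/3) (by norm_num) le_rfl]; norm_num
        refine (hleft.union hright).hasDerivAt ?_
        refine mem_of_superset (Ioi_mem_nhds (show (1/3:ℝ) < 2/3 by norm_num)) (fun y hy => ?_)
        by_cases h : y ≤ 2/3
        · exact Or.inl ⟨le_of_lt hy, h⟩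
        · exact Or.inr (le_of_not_ge h)
      · rw [hv3 x (not_le.2 h2)]
        exact (hasDerivAt_const x (0:ℝ)).congr_of_eventuallyEq
          (eventuallyEq_of_mem (Ioi_mem_nhds h2) (fun y hy => hu3 y (not_le.2 hy)))
  · -- Lipschitz
    refine ⟨1, LipschitzOnWith.of_dist_le_mul (fun x hx y hy => ?_)⟩
    have key : ∀ p q : ℝ, 0 ≤ p → q ≤ 1 → p ≤ q → |u' p - u' q| ≤ q - p := by
      intro p q hp hq hpq
      have hqp : (0:ℝ) ≤ q - p := by linarith
      have hdiv : ∀ z w : ℝ, |z| ≤ |w| → |w| ≤ q - p → |z / 36| ≤ q - p := by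
        intro z w hzw hw
        rw [abs_div, show |(36:ℝ)| = 36 by norm_num]
        nlinarith [abs_nonneg z]
      by_cases h1 : q ≤ 1/3
      · rw [hv1 p (hpq.trans h1), hv1 q h1,
          show -p ^ 3 / 36 - -q ^ 3 / 36 = (q ^ 3 - p ^ 3) / 36 by ring]
        refine hdiv _ (q - p) ?_ (le_of_eq (abs_of_nonneg hqp))
        exact cube_bound q p (by rw [abs_of_nonneg (hp.trans hpq)]; exact h1)
          (by rw [abs_of_nonneg hp]; linarith)
      · by_cases h2 : q ≤ 2/3
        · by_cases h3 : p ≤ 1/3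
          · rw [hv1 p h3, hv2 q h1 h2,
              show -p ^ 3 / 36 - (q - 2/3) ^ 3 / 36 = ((2/3 - q) ^ 3 - p ^ 3) / 36 by ring]
            refine hdiv _ ((2/3 - q) - p) ?_ (abs_le.2 ⟨by linarith, by linarith⟩)
            exact cube_bound (2/3 - q) p
              (abs_le.2 ⟨by linarith, by linarith⟩)
              (abs_le.2 ⟨by linarith, by linarith⟩)
          · rw [hv2 p h3 (hpq.trans h2), hv2 q h1 h2,
              show (p - 2/3) ^ 3 / 36 - (q - 2/3) ^ 3 / 36
                = ((p - 2/3) ^ 3 - (q - 2/3) ^ 3) / 36 by ring]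
            refine hdiv _ ((p - 2/3) - (q - 2/3)) ?_ ?_
            · exact cube_bound (p - 2/3) (q - 2/3)
                (abs_le.2 ⟨by linarith, by linarith⟩)
                (abs_le.2 ⟨by linarith, by linarith⟩)
            · rw [show (p - 2/3) - (q - 2/3) = -(q - p) by ring, abs_neg,
                abs_of_nonneg hqp]
        · by_cases h3 : p ≤ 1/3
          · rw [hv1 p h3, hv3 q h2,
              show -p ^ 3 / 36 - 0 = ((0:ℝ) ^ 3 - p ^ 3) / 36 by ring]
            refine hdiv _ ((0:ℝ) - p) ?_ ?_
            · exact cube_bound 0 p (by norm_num)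
                (abs_le.2 ⟨by linarith, by linarith⟩)
            · rw [zero_sub, abs_neg, abs_of_nonneg hp]; linarith
          · by_cases h4 : p ≤ 2/3
            · rw [hv2 p h3 h4, hv3 q h2,
                show (p - 2/3) ^ 3 / 36 - 0 = ((p - 2/3) ^ 3 - (0:ℝ) ^ 3) / 36 by ring]
              refine hdiv _ ((p - 2/3) - 0) ?_ ?_
              · exact cube_bound (p - 2/3) 0
                  (abs_le.2 ⟨by linarith, by linarith⟩) (by norm_num)
              · rw [sub_zero, abs_of_nonpos (by linarith)]; linarith
            · rw [hv3 p h4, hv3 q h2]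
              simpa using hqp
    rw [NNReal.coe_one, one_mul, Real.dist_eq, Real.dist_eq]
    rcases le_total x y with h | h
    · have := key x y hx.1 hy.2 h
      rw [abs_of_nonpos (by linarith : x - y ≤ 0)]
      linarith
    · have := key y x hy.1 hx.2 h
      rw [abs_sub_comm] at this
      rw [abs_of_nonneg (by linarith : (0:ℝ) ≤ x - y)]
      linarith
  · -- a.e. equation
    have h23 : ∀ᵐ x ∂(volume.restrict (Ioo (0:ℝ) 1)), x ≠ 2/3 := by
      refine ae_restrict_of_ae ?_
      rw [ae_iff]
      have : {x : ℝ | ¬x ≠ 2/3} = {(2/3 : ℝ)} := by ext z; simp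
      rw [this]
      exact measure_singleton _
    filter_upwards [ae_restrict_mem measurableSet_Ioo, h23] with x hx hne
    by_cases hlt : x < 2/3
    · have hupos : 0 < u x := by
        by_cases h : x ≤ 1/3
        · rw [hu1 x h]; nlinarith [pow_le_pow_left₀ hx.1.le h 4]
        · rw [hu2 x h hlt.le]
          have hpos : 0 < 2/3 - x := by linarith
          have h4 : 0 < (2/3 - x) ^ 4 := pow_pos hpos 4
          rw [show (x - 2/3) ^ 4 = (2/3 - x) ^ 4 by ring]
          linarith
      have hs : Real.sqrt (u x) ≠ 0 := (Real.sqrt_pos.2 hupos).ne'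
      have ha : a x = deriv g x / Real.sqrt (u x) := if_pos hlt
      rw [ha, div_mul_cancel₀ _ hs]
    · have hgt : 2/3 < x := lt_of_le_of_ne (le_of_not_gt hlt) (Ne.symm hne)
      have hu0 : u x = 0 := hu3 x (not_le.2 hgt)
      have hg0 : deriv g x = 0 := by
        have heq : g =ᶠ[𝓝 x] fun _ => (0:ℝ) := by
          filter_upwards [Ioi_mem_nhds hgt] with y hy
          show u' y / Real.sqrt (1 + (u' y) ^ 2) = 0
          rw [hv3 y (not_le.2 hy)]
          simp
        rw [heq.deriv_eq, deriv_const]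
      rw [hu0, hg0, Real.sqrt_zero, mul_zero]
  · -- boundedness of a
    refine ⟨max |A| 1, fun x hx => ?_⟩
    by_cases hlt : x < 2/3
    · have ha : a x = deriv g x / Real.sqrt (u x) := if_pos hlt
      have main : ∃ B : ℝ, 0 < B ∧ |deriv g x| ≤ B ∧ B ≤ Real.sqrt (u x) := by
        rcases lt_trichotomy x (1/3) with h1 | h1 | h1
        · -- left cubic region
          refine ⟨1/108, by norm_num, ?_, ?_⟩
          · have hp : HasDerivAt (fun y : ℝ => -(y ^ 3) / 36) (-(x ^ 2) / 12) x := by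
              have := ((hasDerivAt_pow 3 x).neg).div_const 36
              refine this.congr_deriv ?_
              norm_num; ring
            have hcomp := (phi_hasDerivAt (-(x ^ 3) / 36)).comp x hp
            have hg : HasDerivAt g
                (1 / ((1 + (-(x ^ 3) / 36) ^ 2) * Real.sqrt (1 + (-(x ^ 3) / 36) ^ 2)) *
                  (-(x ^ 2) / 12)) x := by
              refine hcomp.congr_of_eventuallyEq ?_
              filter_upwards [Iio_mem_nhds h1] with y hy
              show u' y / Real.sqrt (1 + (u' y) ^ 2) = _
              rw [hv1 y hy.le]
              rfl
            rw [hg.deriv, abs_mul]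
            have hb1 := phi_deriv_le_one (-(x ^ 3) / 36)
            have hb0 := phi_deriv_pos (-(x ^ 3) / 36)
            have hx2 : |-(x ^ 2) / 12| ≤ 1/108 := by
              rw [show -(x ^ 2) / 12 = -(x ^ 2 / 12) by ring, abs_neg,
                abs_of_nonneg (by positivity)]
              nlinarith [pow_le_pow_left₀ hx.1 h1.le 2]
            calc |1 / ((1 + (-(x ^ 3) / 36) ^ 2) * Real.sqrt (1 + (-(x ^ 3) / 36) ^ 2))| *
                  |-(x ^ 2) / 12|
                ≤ 1 * (1/108) := by
                  apply mul_le_mul _ hx2 (abs_nonneg _) (by norm_num)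
                  rw [abs_of_pos hb0]; exact hb1
              _ = 1/108 := by norm_num
          · rw [hu1 x h1.le]
            rw [show (1/108 : ℝ) = Real.sqrt ((1/108) ^ 2) by
              rw [Real.sqrt_sq (by norm_num)]]
            apply Real.sqrt_le_sqrt
            nlinarith [pow_le_pow_left₀ hx.1 h1.le 4]
        · -- the corner x = 1/3
          subst h1
          refine ⟨1/108, by norm_num, ?_, ?_⟩
          · by_cases hdiff : DifferentiableAt ℝ g (1/3)
            · have hp : HasDerivAt (fun y : ℝ => -(y ^ 3) / 36) (-((1/3:ℝ) ^ 2) / 12) (1/3) := by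
                have := ((hasDerivAt_pow 3 (1/3:ℝ)).neg).div_const 36
                refine this.congr_deriv ?_
                norm_num
              have hcomp := (phi_hasDerivAt (-((1/3:ℝ) ^ 3) / 36)).comp (1/3) hp
              have hleft : HasDerivWithinAt g
                  (1 / ((1 + (-((1/3:ℝ) ^ 3) / 36) ^ 2) *
                    Real.sqrt (1 + (-((1/3:ℝ) ^ 3) / 36) ^ 2)) * (-((1/3:ℝ) ^ 2) / 12))
                  (Iic (1/3)) (1/3) := by
                refine hcomp.hasDerivWithinAt.congr (fun y hy => ?_) ?_
                · show u' y / Real.sqrt (1 + (u' y) ^ 2) = _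
                  rw [hv1 y hy]
                  rfl
                · show u' (1/3) / Real.sqrt (1 + (u' (1/3)) ^ 2) = _
                  rw [hv1 (1/3) le_rfl]
                  rfl
              have huniq := (uniqueDiffOn_Iic (1/3:ℝ) (1/3) (mem_Iic.2 le_rfl)).eq_deriv
                _ hdiff.hasDerivAt.hasDerivWithinAt hleft
              rw [huniq, abs_mul]
              have hb1 := phi_deriv_le_one (-((1/3:ℝ) ^ 3) / 36)
              have hb0 := phi_deriv_pos (-((1/3:ℝ) ^ 3) / 36)
              calc |1 / ((1 + (-((1/3:ℝ) ^ 3) / 36) ^ 2) *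
                    Real.sqrt (1 + (-((1/3:ℝ) ^ 3) / 36) ^ 2))| * |(-((1/3:ℝ) ^ 2) / 12)|
                  ≤ 1 * (1/108) := by
                    apply mul_le_mul _ _ (abs_nonneg _) (by norm_num)
                    · rw [abs_of_pos hb0]; exact hb1
                    · rw [show (-((1/3:ℝ) ^ 2) / 12) = -(1/108) by norm_num, abs_neg,
                        abs_of_nonneg (by norm_num)]
                _ = 1/108 := by norm_num
            · rw [deriv_zero_of_not_differentiableAt hdiff]
              norm_num
          · rw [hu1 (1/3) le_rfl]
            rw [show (1/108 : ℝ) = Real.sqrt ((1/108) ^ 2) by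
              rw [Real.sqrt_sq (by norm_num)]]
            apply Real.sqrt_le_sqrt
            norm_num
        · -- the middle quartic region
          have h2 : x < 2/3 := hlt
          have hw : 0 < 2/3 - x := by linarith
          refine ⟨(2/3 - x) ^ 2 / 12, by positivity, ?_, ?_⟩
          · have hp : HasDerivAt (fun y : ℝ => (y - 2/3) ^ 3 / 36) ((x - 2/3) ^ 2 / 12) x := by
              have := (((hasDerivAt_id x).sub_const (2/3)).pow 3).div_const 36
              refine this.congr_deriv ?_
              norm_num; ring
            have hcomp := (phi_hasDerivAt ((x - 2/3) ^ 3 / 36)).comp x hp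
            have hg : HasDerivAt g
                (1 / ((1 + ((x - 2/3) ^ 3 / 36) ^ 2) * Real.sqrt (1 + ((x - 2/3) ^ 3 / 36) ^ 2)) *
                  ((x - 2/3) ^ 2 / 12)) x := by
              refine hcomp.congr_of_eventuallyEq ?_
              filter_upwards [Ioo_mem_nhds h1 h2] with y hy
              show u' y / Real.sqrt (1 + (u' y) ^ 2) = _
              rw [hv2 y (not_le.2 hy.1) hy.2.le]
              rfl
            rw [hg.deriv, abs_mul]
            have hb1 := phi_deriv_le_one ((x - 2/3) ^ 3 / 36)
            have hb0 := phi_deriv_pos ((x - 2/3) ^ 3 / 36)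
            have he : |(x - 2/3) ^ 2 / 12| = (2/3 - x) ^ 2 / 12 := by
              rw [abs_of_nonneg (by positivity)]
              ring_nf
            calc |1 / ((1 + ((x - 2/3) ^ 3 / 36) ^ 2) *
                  Real.sqrt (1 + ((x - 2/3) ^ 3 / 36) ^ 2))| * |(x - 2/3) ^ 2 / 12|
                ≤ 1 * ((2/3 - x) ^ 2 / 12) := by
                  apply mul_le_mul _ (le_of_eq he) (abs_nonneg _) (by norm_num)
                  rw [abs_of_pos hb0]; exact hb1
              _ = (2/3 - x) ^ 2 / 12 := by norm_num
          · rw [hu2 x (not_le.2 h1) h2.le]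
            rw [show (1/144 : ℝ) * (x - 2/3) ^ 4 = ((2/3 - x) ^ 2 / 12) ^ 2 by ring]
            rw [Real.sqrt_sq (by positivity)]
      rcases main with ⟨B, hB0, hB1, hB2⟩
      have hs : 0 < Real.sqrt (u x) := lt_of_lt_of_le hB0 hB2
      rw [ha, abs_div, abs_of_pos hs]
      refine le_trans ?_ (le_max_right |A| 1)
      rw [div_le_one hs]
      exact hB1.trans hB2
    · have ha : a x = A := if_neg hlt
      rw [ha]
      exact le_max_left _ _
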